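/- arXiv:math/9409217 — 3 statements merged into one kernel-verified Lean document; each statement's English description precedes it below -/
import Mathlib

section
/- In Γ_Δ(D), let X and Y be vertices with k = d(X,Y) ≥ 1, and for a letter i ≠ x_1 let i∘X denote the out-neighbor of X beginning with i (rotation if i occurs in X, shift otherwise). Then d(i∘X, Y) ≥ d(X,Y) unless i = y_k (the k-th letter of Y), in which case d(i∘X, Y) = d(X,Y) − 1. -/
/-- `l` is a vertex of the cycle prefix digraph `Γ_Δ(D)`: a sequence of `D`
distinct letters from the alphabet `{1, …, Δ+1}`. -/
def IsVtx (Δ D : ℕ) (l : List ℕ) : Prop :=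
  l.length = D ∧ l.Nodup ∧ ∀ x ∈ l, 1 ≤ x ∧ x ≤ Δ + 1

/-- Adjacency in `Γ_Δ(D, -r)` (for `r = 0` this is `Γ_Δ(D)` itself): arcs are the
rotations `R_k` for `r+2 ≤ k ≤ D` (0-indexed: move the letter at index `j`,
`r+1 ≤ j ≤ D-1`, to the front) and the shifts `S_y` for letters `y` not in the
sequence. -/
def adjR (Δ D r : ℕ) (X Y : List ℕ) : Prop :=
  IsVtx Δ D X ∧ IsVtx Δ D Y ∧
    ((∃ j, r + 1 ≤ j ∧ j < D ∧ Y = X.getD j 0 :: X.eraseIdx j) ∨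
     (∃ y, y ∉ X ∧ Y = y :: X.dropLast))

/-- `w` is a directed walk of length `n` from `u` to `v` in the digraph with
adjacency relation `A`. -/
def IsWalk {V : Type*} (A : V → V → Prop) (u v : V) (n : ℕ) (w : ℕ → V) : Prop :=
  w 0 = u ∧ w n = v ∧ ∀ i < n, A (w i) (w (i + 1))

/-- Directed distance: the least length of a directed walk from `u` to `v`. -/
noncomputable def cpDist {V : Type*} (A : V → V → Prop) (u v : V) : ℕ :=
  sInf {n | ∃ w, IsWalk A u v n w}

/-- `i ∘ X`: the out-neighbor of `X` beginning with the letter `i` (a rotation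
if `i` occurs in `X`, a shift otherwise). -/
def comp (i : ℕ) (X : List ℕ) : List ℕ :=
  if i ∈ X then i :: X.erase i else i :: X.dropLast

namespace CPaux

open List

/-- The boolean predicate "not a member of `Ym`". -/
def pn (Ym : List ℕ) : ℕ → Bool := fun a => decide (a ∉ Ym)

/-- The key invariant: the tail `Y.drop m` of `Y` is a prefix of what remains
of `X` after filtering out the letters of `Y.take m`. -/
def C (Y : List ℕ) (m : ℕ) (X : List ℕ) : Prop :=
  Y.drop m <+: X.filter (pn (Y.take m))

lemma pn_true {Ym : List ℕ} {a : ℕ} (h : a ∉ Ym) : pn Ym a = true := by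
  simp [pn, h]

lemma pn_false {Ym : List ℕ} {a : ℕ} (h : a ∈ Ym) : pn Ym a = false := by
  simp [pn, h]

lemma C_of_le {Y X : List ℕ} {m : ℕ} (h : Y.length ≤ m) : C Y m X := by
  unfold C
  rw [drop_eq_nil_of_le h]
  exact nil_prefix

lemma pn_take_succ {Y : List ℕ} {m : ℕ} (hm : m < Y.length) (a : ℕ) :
    pn (Y.take (m + 1)) a = (pn (Y.take m) a && decide (a ≠ Y[m])) := by
  simp only [pn, take_succ, List.getElem?_eq_getElem hm, Option.toList_some, mem_append,
    mem_singleton, ← decide_not, ← Bool.decide_and]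
  apply decide_eq_decide.mpr
  tauto

lemma getElem_mem_take_succ {Y : List ℕ} {m : ℕ} (hm : m < Y.length) :
    Y[m] ∈ Y.take (m + 1) := by
  rw [take_succ, List.getElem?_eq_getElem hm]
  exact mem_append_right _ (by simp)

lemma getElem_not_mem_take {Y : List ℕ} (hnd : Y.Nodup) {m : ℕ} (hm : m < Y.length) :
    Y[m] ∉ Y.take m := by
  intro h
  have h2 : Y[m] ∈ Y.drop m := by
    rw [← getElem_cons_drop hm]; exact mem_cons_self
  have hnd' : (Y.take m ++ Y.drop m).Nodup := by rwa [take_append_drop]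
  exact disjoint_of_nodup_append hnd' h h2

lemma getElem_not_mem_drop {Y : List ℕ} (hnd : Y.Nodup) {m : ℕ} (hm : m < Y.length) :
    Y[m] ∉ Y.drop (m + 1) := by
  have h1 : (Y.drop m).Nodup := (drop_sublist m Y).nodup hnd
  rw [← getElem_cons_drop hm] at h1
  exact (nodup_cons.mp h1).1

lemma filter_succ {Y : List ℕ} (l : List ℕ) {m : ℕ} (hm : m < Y.length) :
    l.filter (pn (Y.take (m + 1)))
      = (l.filter (pn (Y.take m))).filter (fun a => decide (a ≠ Y[m])) := by
  rw [filter_filter]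
  exact (filter_congr (fun a _ => by rw [pn_take_succ hm, Bool.and_comm])).symm

lemma prefix_filter_ne {Y : List ℕ} (hnd : Y.Nodup) {m : ℕ} (hm : m < Y.length)
    {M : List ℕ} (h : Y.drop m <+: M) :
    Y.drop (m + 1) <+: M.filter (fun a => decide (a ≠ Y[m])) := by
  obtain ⟨R, hR⟩ := h
  rw [← hR, filter_append, ← getElem_cons_drop hm, filter_cons]
  have h1 : (decide (Y[m] ≠ Y[m])) = false := by simp
  rw [h1]
  simp only [Bool.false_eq_true, if_false]
  rw [filter_eq_self.mpr (fun a ha => by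
    have : a ≠ Y[m] := fun hEq => getElem_not_mem_drop hnd hm (hEq ▸ ha)
    simpa using this)]
  exact prefix_append _ _

lemma filter_take_succ_of_not_mem {Y : List ℕ} {m : ℕ} (hm : m < Y.length)
    {W : List ℕ} (hc : Y[m] ∉ W) :
    W.filter (pn (Y.take (m + 1))) = W.filter (pn (Y.take m)) := by
  apply filter_congr
  intro a ha
  rw [pn_take_succ hm]
  have : a ≠ Y[m] := fun h => hc (h ▸ ha)
  simp [this]

lemma prefix_shrink {L M N : List ℕ} (h : L <+: M ++ N) (hl : L.length ≤ M.length) :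
    L <+: M := by
  rw [prefix_iff_eq_take, take_append_of_le_length hl] at h
  exact h ▸ take_prefix _ M

lemma length_filter_ge {X : List ℕ} (hnd : X.Nodup) (Ym : List ℕ) :
    X.length ≤ (X.filter (pn Ym)).length + Ym.length := by
  have hperm := (filter_append_perm (pn Ym) X).length_eq
  rw [length_append] at hperm
  have hF : (X.filter (fun a => !(pn Ym a))).Nodup := hnd.filter _
  have hsub : ∀ a ∈ X.filter (fun a => !(pn Ym a)), a ∈ Ym := by
    intro a ha
    have := of_mem_filter ha
    simpa [pn] using this
  have hle : (X.filter (fun a => !(pn Ym a))).length ≤ Ym.length := by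
    calc (X.filter (fun a => !(pn Ym a))).length
        = (X.filter (fun a => !(pn Ym a))).toFinset.card := (toFinset_card_of_nodup hF).symm
      _ ≤ Ym.toFinset.card := Finset.card_le_card (fun a ha => by
            rw [List.mem_toFinset] at ha ⊢
            exact hsub a ha)
      _ ≤ Ym.length := toFinset_card_le Ym
  omega

lemma erase_decomp {X : List ℕ} (hnd : X.Nodup) {c : ℕ} (hc : c ∈ X) :
    ∃ A B, X = A ++ c :: B ∧ X.erase c = A ++ B ∧ c ∉ A ∧ c ∉ B := by
  obtain ⟨A, B, rfl⟩ := append_of_mem hc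
  rw [nodup_append] at hnd
  obtain ⟨hA, hB, hdisj⟩ := hnd
  have hcA : c ∉ A := fun h => hdisj c h c mem_cons_self rfl
  have hcB : c ∉ B := (nodup_cons.mp hB).1
  exact ⟨A, B, rfl, by rw [erase_append_right _ hcA, erase_cons_head], hcA, hcB⟩

lemma headI_comp (i : ℕ) (X : List ℕ) : (comp i X).headI = i := by
  unfold comp; split <;> rfl

lemma comp_isVtx {Δ D : ℕ} {X : List ℕ} (hX : IsVtx Δ D X) (hD : 1 ≤ D)
    {i : ℕ} (h1 : 1 ≤ i) (h2 : i ≤ Δ + 1) : IsVtx Δ D (comp i X) := by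
  obtain ⟨hlen, hnd, hbd⟩ := hX
  unfold comp
  split
  · next hi =>
    refine ⟨?_, ?_, ?_⟩
    · rw [length_cons, length_erase_of_mem hi, hlen]
      omega
    · exact nodup_cons.mpr ⟨hnd.not_mem_erase, hnd.erase i⟩
    · intro x hx
      rcases mem_cons.mp hx with rfl | hx
      · exact ⟨h1, h2⟩
      · exact hbd x (mem_of_mem_erase hx)
  · next hi =>
    refine ⟨?_, ?_, ?_⟩
    · rw [length_cons, length_dropLast, hlen]
      omega
    · exact nodup_cons.mpr ⟨fun h => hi ((dropLast_sublist X).subset h),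
        (dropLast_sublist X).nodup hnd⟩
    · intro x hx
      rcases mem_cons.mp hx with rfl | hx
      · exact ⟨h1, h2⟩
      · exact hbd x ((dropLast_sublist X).subset hx)

lemma comp_adj {Δ D : ℕ} {X : List ℕ} (hX : IsVtx Δ D X) (hD : 1 ≤ D)
    {i : ℕ} (h1 : 1 ≤ i) (h2 : i ≤ Δ + 1) (hne : i ≠ X.headI) :
    adjR Δ D 0 X (comp i X) := by
  refine ⟨hX, comp_isVtx hX hD h1 h2, ?_⟩
  by_cases hi : i ∈ X
  · left
    obtain ⟨A, B, hX1, hX2, hcA, hcB⟩ := erase_decomp hX.2.1 hi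
    refine ⟨A.length, ?_, ?_, ?_⟩
    · rcases A with _ | ⟨a, A'⟩
      · exfalso; apply hne; rw [hX1]; rfl
      · simp
    · have hl := hX.1
      rw [hX1, length_append, length_cons] at hl
      omega
    · rw [comp, if_pos hi, hX2, hX1]
      have hjlt : A.length < (A ++ i :: B).length := by simp
      have e1 : (A ++ i :: B).getD A.length 0 = i := by
        rw [getD_eq_getElem _ _ hjlt, getElem_append_right (le_refl _)]
        simp
      have e2 : (A ++ i :: B).eraseIdx A.length = A ++ B := by
        rw [eraseIdx_eq_take_drop_succ, take_left]
        congr 1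
        have h3 : A ++ i :: B = (A ++ [i]) ++ B := by simp
        rw [h3, drop_left' (by simp)]
      rw [e1, e2]
  · right
    exact ⟨i, hi, by rw [comp, if_neg hi]⟩

lemma walk_cons {V : Type*} {A : V → V → Prop} {u v y : V} {n : ℕ} {w : ℕ → V}
    (ha : A u v) (hw : IsWalk A v y n w) :
    IsWalk A u y (n + 1) (fun t => if t = 0 then u else w (t - 1)) := by
  obtain ⟨h0, hn, hs⟩ := hw
  refine ⟨by simp, by simp [hn], ?_⟩
  intro t ht
  rcases Nat.eq_zero_or_pos t with rfl | htpos
  · simpa [h0] using ha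
  · have h1 : t ≠ 0 := by omega
    have h2 : t + 1 ≠ 0 := by omega
    simp only [if_neg h1, if_neg h2]
    have h3 : t - 1 + 1 = t := by omega
    have h4 : t + 1 - 1 = t := by omega
    rw [h4]
    have := hs (t - 1) (by omega)
    rwa [h3] at this

lemma walk_tail {V : Type*} {A : V → V → Prop} {u y : V} {n : ℕ} {w : ℕ → V}
    (hw : IsWalk A u y (n + 1) w) :
    A u (w 1) ∧ IsWalk A (w 1) y n (fun t => w (t + 1)) := by
  obtain ⟨h0, hn, hs⟩ := hw
  exact ⟨h0 ▸ hs 0 (by omega), rfl, hn, fun t ht => hs (t + 1) (by omega)⟩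

lemma C_zero {Y X : List ℕ} (h : C Y 0 X) (hlen : X.length = Y.length) : X = Y := by
  unfold C at h
  rw [take_zero, drop_zero] at h
  rw [filter_eq_self.mpr (fun a _ => by simp [pn])] at h
  exact (h.eq_of_length (by omega)).symm

/-- The main step for the necessity direction. -/
lemma nec_step {Δ D : ℕ} {Y X Z : List ℕ} (hY : IsVtx Δ D Y) {m : ℕ}
    (hA : adjR Δ D 0 X Z) (hC : C Y m Z) : C Y (m + 1) X := by
  obtain ⟨hXv, hZv, harc⟩ := hA
  rcases le_or_gt D (m + 1) with hD' | hD'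
  · exact C_of_le (by rw [hY.1]; exact hD')
  have hm : m < Y.length := by rw [hY.1]; omega
  have hYnd := hY.2.1
  have hXnd := hXv.2.1
  -- decompose the arc
  rcases harc with ⟨j, hj1, hjD, hZeq⟩ | ⟨y, hy, hZeq⟩
  · -- rotation
    have hjX : j < X.length := by rw [hXv.1]; omega
    set c := X[j] with hc
    have hXdec : X = X.take j ++ c :: X.drop (j + 1) := by
      conv_lhs => rw [← take_append_drop j X]
      rw [getElem_cons_drop]
    set A := X.take j with hA
    set B := X.drop (j + 1) with hB
    have hW : X.eraseIdx j = A ++ B := eraseIdx_eq_take_drop_succ X j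
    have hnd2 : (A ++ c :: B).Nodup := by rw [← hXdec]; exact hXnd
    rw [nodup_append] at hnd2
    have hcA : c ∉ A := fun h => hnd2.2.2 c h c mem_cons_self rfl
    have hcB : c ∉ B := (nodup_cons.mp hnd2.2.1).1
    have hcZ : Z = c :: (A ++ B) := by
      rw [hZeq, hW, getD_eq_getElem _ _ hjX]
    unfold C at hC ⊢
    rw [hcZ, filter_cons] at hC
    by_cases hcY : c ∈ Y.take m
    · rw [pn_false hcY] at hC
      simp only [Bool.false_eq_true, if_false] at hC
      have key : Y.drop (m + 1) <+: (A ++ B).filter (pn (Y.take (m + 1))) := by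
        rw [filter_succ _ hm]
        exact prefix_filter_ne hYnd hm hC
      have hXf : X.filter (pn (Y.take (m + 1))) = (A ++ B).filter (pn (Y.take (m + 1))) := by
        conv_lhs => rw [hXdec]
        rw [filter_append, filter_cons, pn_false (by
          rw [take_succ]; exact mem_append_left _ hcY)]
        simp only [Bool.false_eq_true, if_false]
        rw [filter_append]
      rw [hXf]; exact key
    · rw [pn_true hcY] at hC
      simp only [if_true] at hC
      rw [← getElem_cons_drop hm, cons_prefix_cons] at hC
      obtain ⟨hce, htail⟩ := hC
      have hcW : Y[m] ∉ A ++ B := by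
        rw [hce]; simp [hcA, hcB]
      have hXf : X.filter (pn (Y.take (m + 1))) = (A ++ B).filter (pn (Y.take m)) := by
        conv_lhs => rw [hXdec]
        rw [filter_append, filter_cons, pn_false (by
          rw [← hce]; exact getElem_mem_take_succ hm)]
        simp only [Bool.false_eq_true, if_false]
        rw [← filter_append, filter_take_succ_of_not_mem hm hcW]
      rw [hXf]; exact htail
  · -- shift
    have hXne : X ≠ [] := by
      intro h; rw [h] at hXv; simp [IsVtx] at hXv; omega
    set e := X.getLast hXne with he
    have hXdec : X = X.dropLast ++ [e] := (dropLast_append_getLast hXne).symm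
    set W := X.dropLast with hWdef
    unfold C at hC ⊢
    rw [hZeq, filter_cons] at hC
    by_cases hcY : y ∈ Y.take m
    · rw [pn_false hcY] at hC
      simp only [Bool.false_eq_true, if_false] at hC
      have key : Y.drop (m + 1) <+: W.filter (pn (Y.take (m + 1))) := by
        rw [filter_succ _ hm]
        exact prefix_filter_ne hYnd hm hC
      conv_rhs => rw [hXdec]
      rw [filter_append]
      exact key.trans (prefix_append _ _)
    · rw [pn_true hcY] at hC
      simp only [if_true] at hC
      rw [← getElem_cons_drop hm, cons_prefix_cons] at hC
      obtain ⟨hce, htail⟩ := hC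
      have hcW : Y[m] ∉ W := by
        rw [hce]; intro h; exact hy ((dropLast_sublist X).subset h)
      conv_rhs => rw [hXdec]
      rw [filter_append, filter_take_succ_of_not_mem hm hcW]
      exact htail.trans (prefix_append _ _)

/-- The main step for the sufficiency direction. -/
lemma suff_step {Δ D : ℕ} {Y X : List ℕ} (hX : IsVtx Δ D X) (hY : IsVtx Δ D Y)
    {m : ℕ} (hm : m < D) (hC : C Y (m + 1) X) :
    C Y m (comp (Y.getD m 0) X) := by
  have hmY : m < Y.length := by rw [hY.1]; exact hm
  have hcc : Y.getD m 0 = Y[m] := getD_eq_getElem _ _ hmY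
  have hcnot : Y[m] ∉ Y.take m := getElem_not_mem_take hY.2.1 hmY
  unfold C comp
  rw [hcc]
  unfold C at hC
  split
  · next hmem =>
    obtain ⟨A, B, hX1, hX2, hcA, hcB⟩ := erase_decomp hX.2.1 hmem
    rw [hX2, filter_cons, pn_true hcnot]
    simp only [if_true]
    rw [← getElem_cons_drop hmY, cons_prefix_cons]
    refine ⟨rfl, ?_⟩
    have hXf : X.filter (pn (Y.take (m + 1))) = (A ++ B).filter (pn (Y.take m)) := by
      conv_lhs => rw [hX1]
      rw [filter_append, filter_cons, pn_false (getElem_mem_take_succ hmY)]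
      simp only [Bool.false_eq_true, if_false]
      rw [← filter_append, filter_take_succ_of_not_mem hmY (by simp [hcA, hcB])]
    rw [hXf] at hC
    exact hC
  · next hmem =>
    rw [filter_cons, pn_true hcnot]
    simp only [if_true]
    rw [← getElem_cons_drop hmY, cons_prefix_cons]
    refine ⟨rfl, ?_⟩
    have hXne : X ≠ [] := by
      intro h; rw [h] at hX; simp [IsVtx] at hX; omega
    have hXf : X.filter (pn (Y.take (m + 1))) = X.filter (pn (Y.take m)) :=
      filter_take_succ_of_not_mem hmY hmem
    rw [hXf] at hC
    have hXdec : X = X.dropLast ++ [X.getLast hXne] := (dropLast_append_getLast hXne).symm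
    rw [hXdec, filter_append] at hC
    apply prefix_shrink hC
    -- length argument
    have h1 : X.length ≤ (X.filter (pn (Y.take m))).length + m := by
      have := length_filter_ge hX.2.1 (Y.take m)
      have h2 : (Y.take m).length ≤ m := by rw [length_take]; omega
      omega
    have h3 : (X.filter (pn (Y.take m))).length
        = (X.dropLast.filter (pn (Y.take m))).length
          + ([X.getLast hXne].filter (pn (Y.take m))).length := by
      conv_lhs => rw [hXdec]
      rw [filter_append, length_append]
    have h4 : ([X.getLast hXne].filter (pn (Y.take m))).length ≤ 1 := by
      rw [filter_cons]
      split <;> simp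
    have h5 : (Y.drop (m + 1)).length = Y.length - (m + 1) := length_drop
    have h6 : X.length = D := hX.1
    have h7 : Y.length = D := hY.1
    omega

lemma C_pred {Δ D : ℕ} {Y X : List ℕ} (hX : IsVtx Δ D X) (hY : IsVtx Δ D Y)
    {m : ℕ} (hm : m < D) (hC : C Y (m + 1) X) (hh : Y.getD m 0 = X.headI) :
    C Y m X := by
  have hmY : m < Y.length := by rw [hY.1]; exact hm
  have hcc : Y.getD m 0 = Y[m] := getD_eq_getElem _ _ hmY
  obtain ⟨x, T, rfl⟩ : ∃ x T, X = x :: T := by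
    rcases X with _ | ⟨x, T⟩
    · exfalso; have := hX.1; simp at this; omega
    · exact ⟨x, T, rfl⟩
  have hx : Y[m] = x := by rw [← hcc, hh]; rfl
  have hxT : Y[m] ∉ T := by rw [hx]; exact (nodup_cons.mp hX.2.1).1
  unfold C at hC ⊢
  rw [filter_cons, pn_false (by rw [← hx]; exact getElem_mem_take_succ hmY)] at hC
  simp only [Bool.false_eq_true, if_false] at hC
  rw [filter_take_succ_of_not_mem hmY hxT] at hC
  rw [filter_cons, pn_true (by rw [← hx]; exact getElem_not_mem_take hY.2.1 hmY)]
  simp only [if_true]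
  rw [← getElem_cons_drop hmY, cons_prefix_cons]
  exact ⟨hx, hC⟩

/-- Sufficiency: from the invariant `C Y n X` (with the head caveat) one can
construct a walk of length `n`. -/
lemma suff {Δ D : ℕ} {Y : List ℕ} (hY : IsVtx Δ D Y) :
    ∀ n, n ≤ D → ∀ X : List ℕ, IsVtx Δ D X → C Y n X →
      (n = 0 ∨ Y.getD (n - 1) 0 ≠ X.headI) →
      ∃ w, IsWalk (adjR Δ D 0) X Y n w := by
  intro n
  induction n with
  | zero =>
    intro _ X hX hC _
    have hXY : X = Y := C_zero hC (by rw [hX.1, hY.1])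
    exact ⟨fun _ => Y, hXY.symm, rfl, fun i hi => absurd hi (by omega)⟩
  | succ n ih =>
    intro hn X hX hC hhead
    have hhead' : Y.getD n 0 ≠ X.headI := by
      rcases hhead with h | h
      · omega
      · simpa using h
    have hnY : n < Y.length := by rw [hY.1]; omega
    have hcY : Y.getD n 0 ∈ Y := by
      rw [getD_eq_getElem _ _ hnY]; exact getElem_mem _
    have hc1 := hY.2.2 _ hcY
    have hD1 : 1 ≤ D := by omega
    have hadj : adjR Δ D 0 X (comp (Y.getD n 0) X) := comp_adj hX hD1 hc1.1 hc1.2 hhead'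
    have hvtx := comp_isVtx hX hD1 hc1.1 hc1.2 (i := Y.getD n 0)
    have hC' : C Y n (comp (Y.getD n 0) X) := suff_step hX hY (by omega) hC
    have hcond : n = 0 ∨ Y.getD (n - 1) 0 ≠ (comp (Y.getD n 0) X).headI := by
      rcases Nat.eq_zero_or_pos n with rfl | hpos
      · exact Or.inl rfl
      · right
        rw [headI_comp]
        intro hEq
        have h1 : n - 1 < Y.length := by omega
        rw [getD_eq_getElem _ _ h1, getD_eq_getElem _ _ hnY] at hEq
        have := (hY.2.1.getElem_inj_iff).mp hEq
        omega
    obtain ⟨w, hw⟩ := ih (by omega) _ hvtx hC' hcond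
    exact ⟨_, walk_cons hadj hw⟩

/-- Necessity: any walk of length `n` from `X` to `Y` yields the invariant. -/
lemma nec {Δ D : ℕ} {Y : List ℕ} (hY : IsVtx Δ D Y) :
    ∀ n (X : List ℕ) (w : ℕ → List ℕ), IsWalk (adjR Δ D 0) X Y n w → C Y n X := by
  intro n
  induction n with
  | zero =>
    intro X w hw
    have hXY : X = Y := by rw [← hw.1, hw.2.1]
    subst hXY
    unfold C
    rw [take_zero, drop_zero, filter_eq_self.mpr (fun a _ => by simp [pn])]
  | succ n ih =>
    intro X w hw
    obtain ⟨ha, hw'⟩ := walk_tail hw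
    exact nec_step hY ha (ih _ _ hw')

/-- From any vertex one reaches `Y` by a walk of length at most `D`. -/
lemma reach {Δ D : ℕ} (hD : 1 ≤ D) {X Y : List ℕ} (hX : IsVtx Δ D X) (hY : IsVtx Δ D Y) :
    ∃ n, n ≤ D ∧ ∃ w, IsWalk (adjR Δ D 0) X Y n w := by
  by_cases hh : Y.getD (D - 1) 0 = X.headI
  · refine ⟨D - 1, by omega, ?_⟩
    have h1 : D - 1 < Y.length := by rw [hY.1]; omega
    obtain ⟨x, T, rfl⟩ : ∃ x T, X = x :: T := by
      rcases X with _ | ⟨x, T⟩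
      · exfalso; have := hX.1; simp at this; omega
      · exact ⟨x, T, rfl⟩
    have hx : Y[D - 1] = x := by
      rw [← getD_eq_getElem Y 0 h1, hh]; rfl
    have hC : C Y (D - 1) (x :: T) := by
      unfold C
      have hdrop : Y.drop (D - 1) = [Y[D - 1]] := by
        rw [← getElem_cons_drop h1, drop_eq_nil_of_le (by rw [hY.1]; omega)]
      rw [hdrop, filter_cons, pn_true (by rw [← hx]; exact getElem_not_mem_take hY.2.1 h1)]
      simp only [if_true]
      rw [cons_prefix_cons]
      exact ⟨hx, nil_prefix⟩
    apply suff hY (D - 1) (by omega) _ hX hC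
    rcases Nat.eq_or_lt_of_le hD with h | h
    · left; omega
    · right
      intro hEq
      rw [← hh] at hEq
      have ha : D - 1 - 1 < Y.length := by rw [hY.1]; omega
      have hb : D - 1 < Y.length := by rw [hY.1]; omega
      rw [getD_eq_getElem _ _ ha, getD_eq_getElem _ _ hb] at hEq
      have := (hY.2.1.getElem_inj_iff).mp hEq
      omega
  · refine ⟨D, le_refl D, ?_⟩
    apply suff hY D (le_refl D) X hX (C_of_le (by rw [hY.1])) (Or.inr hh)

/-- If `d(X, Y) = k ≥ 1` then the invariant `C Y (k-1) X` fails. -/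
lemma notC {Δ D : ℕ} {X Y : List ℕ} (hD : 1 ≤ D) (hX : IsVtx Δ D X) (hY : IsVtx Δ D Y)
    {k : ℕ} (hk1 : 1 ≤ k) (hkD : k ≤ D)
    (hmin : ∀ m, (∃ w, IsWalk (adjR Δ D 0) X Y m w) → k ≤ m) :
    ¬ C Y (k - 1) X := by
  intro hC
  rcases Nat.eq_zero_or_pos (k - 1) with h0 | hpos
  · rw [h0] at hC
    have hXY : X = Y := C_zero hC (by rw [hX.1, hY.1])
    have := hmin 0 ⟨fun _ => Y, hXY.symm, rfl, fun i hi => absurd hi (by omega)⟩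
    omega
  by_cases hh : Y.getD (k - 1 - 1) 0 = X.headI
  · have hC2 : C Y (k - 2) X := by
      have harith : k - 2 + 1 = k - 1 := by omega
      apply C_pred hX hY (m := k - 2) (by omega) (by rw [harith]; exact hC)
      rw [show k - 2 = k - 1 - 1 by omega]
      exact hh
    have hcond : k - 2 = 0 ∨ Y.getD (k - 2 - 1) 0 ≠ X.headI := by
      rcases Nat.eq_zero_or_pos (k - 2) with h | h
      · exact Or.inl h
      · right
        intro hEq
        rw [← hh] at hEq
        have ha : k - 2 - 1 < Y.length := by rw [hY.1]; omega
        have hb : k - 1 - 1 < Y.length := by rw [hY.1]; omega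
        rw [getD_eq_getElem _ _ ha, getD_eq_getElem _ _ hb] at hEq
        have := (hY.2.1.getElem_inj_iff).mp hEq
        omega
    obtain ⟨w, hw⟩ := suff hY (k - 2) (by omega) X hX hC2 hcond
    have := hmin _ ⟨w, hw⟩
    omega
  · obtain ⟨w, hw⟩ := suff hY (k - 1) (by omega) X hX hC (Or.inr hh)
    have := hmin _ ⟨w, hw⟩
    omega

end CPaux

/-- in `Γ_Δ(D)` with `k = d(X, Y) ≥ 1` and `i ≠ x_1`, we have
`d(i∘X, Y) ≥ d(X, Y)` unless `i = y_k`, in which case `d(i∘X, Y) = k - 1`. -/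
theorem dist_comp (Δ D : ℕ) (hD : 1 ≤ D) (hΔ : D ≤ Δ)
    (X Y : List ℕ) (hX : IsVtx Δ D X) (hY : IsVtx Δ D Y)
    (k : ℕ) (hk : cpDist (adjR Δ D 0) X Y = k) (hk1 : 1 ≤ k)
    (i : ℕ) (hi1 : 1 ≤ i) (hi2 : i ≤ Δ + 1) (hne : i ≠ X.headI) :
    (i = Y.getD (k - 1) 0 → cpDist (adjR Δ D 0) (comp i X) Y = k - 1) ∧
    (i ≠ Y.getD (k - 1) 0 → k ≤ cpDist (adjR Δ D 0) (comp i X) Y) := by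
  classical
  open CPaux List in
  -- basic setup
  have hk' : sInf {n | ∃ w, IsWalk (adjR Δ D 0) X Y n w} = k := hk
  have hmin : ∀ m, (∃ w, IsWalk (adjR Δ D 0) X Y m w) → k ≤ m := by
    intro m hm
    rw [← hk']
    exact Nat.sInf_le hm
  obtain ⟨n0, hn0D, hw0⟩ := reach hD hX hY
  have hSne : {n | ∃ w, IsWalk (adjR Δ D 0) X Y n w}.Nonempty := ⟨n0, hw0⟩
  have hkD : k ≤ D := le_trans (by rw [← hk']; exact Nat.sInf_le hw0) hn0D
  have hkmem : ∃ w, IsWalk (adjR Δ D 0) X Y k w := by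
    have := Nat.sInf_mem hSne
    rwa [hk'] at this
  obtain ⟨wk, hwk⟩ := hkmem
  have hCk : CPaux.C Y k X := nec hY k X wk hwk
  have hnotC : ¬ CPaux.C Y (k - 1) X := notC hD hX hY hk1 hkD hmin
  have hadjXZ : adjR Δ D 0 X (comp i X) := comp_adj hX hD hi1 hi2 hne
  have hZv : IsVtx Δ D (comp i X) := comp_isVtx hX hD hi1 hi2
  obtain ⟨n1, hn1D, hw1⟩ := reach hD hZv hY
  have hTne : {n | ∃ w, IsWalk (adjR Δ D 0) (comp i X) Y n w}.Nonempty := ⟨n1, hw1⟩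
  have hTmem := Nat.sInf_mem hTne
  set d' := sInf {n | ∃ w, IsWalk (adjR Δ D 0) (comp i X) Y n w} with hd'
  obtain ⟨wz, hwz⟩ := hTmem
  have hext : k ≤ d' + 1 := hmin _ ⟨_, walk_cons hadjXZ hwz⟩
  have hk1Y : k - 1 < Y.length := by rw [hY.1]; omega
  constructor
  · -- i = y_k
    intro hiY
    have hCZ : CPaux.C Y (k - 1) (comp i X) := by
      have harith : k - 1 + 1 = k := by omega
      have := suff_step hX hY (m := k - 1) (by omega) (by rw [harith]; exact hCk)
      rwa [← hiY] at this
    have hcond : k - 1 = 0 ∨ Y.getD (k - 1 - 1) 0 ≠ (comp i X).headI := by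
      rcases Nat.eq_zero_or_pos (k - 1) with h | h
      · exact Or.inl h
      · right
        rw [headI_comp, hiY]
        intro hEq
        have ha : k - 1 - 1 < Y.length := by rw [hY.1]; omega
        rw [getD_eq_getElem _ _ ha, getD_eq_getElem _ _ hk1Y] at hEq
        have := (hY.2.1.getElem_inj_iff).mp hEq
        omega
    obtain ⟨w, hw⟩ := suff hY (k - 1) (by omega) _ hZv hCZ hcond
    have hle : d' ≤ k - 1 := Nat.sInf_le ⟨w, hw⟩
    show sInf {n | ∃ w, IsWalk (adjR Δ D 0) (comp i X) Y n w} = k - 1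
    rw [← hd']
    omega
  · -- i ≠ y_k
    intro hiY
    show k ≤ sInf {n | ∃ w, IsWalk (adjR Δ D 0) (comp i X) Y n w}
    rw [← hd']
    by_contra hlt
    push_neg at hlt
    have hd'eq : d' = k - 1 := by omega
    have hCZ : CPaux.C Y (k - 1) (comp i X) := by
      have := nec hY d' _ wz hwz
      rwa [hd'eq] at this
    have hiYg : i ≠ Y[k - 1] := by
      rw [← getD_eq_getElem Y 0 hk1Y]; exact hiY
    -- analyze
    by_cases hiT : i ∈ Y.take (k - 1)
    · -- derive C Y (k-1) X, contradiction
      apply hnotC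
      unfold CPaux.C at hCZ ⊢
      by_cases him : i ∈ X
      · obtain ⟨A, B, hX1, hX2, hcA, hcB⟩ := erase_decomp hX.2.1 him
        rw [comp, if_pos him, filter_cons, pn_false hiT, hX2] at hCZ
        simp only [Bool.false_eq_true, if_false] at hCZ
        have hXf : X.filter (pn (Y.take (k - 1))) = (A ++ B).filter (pn (Y.take (k - 1))) := by
          conv_lhs => rw [hX1]
          rw [filter_append, filter_cons, pn_false hiT]
          simp only [Bool.false_eq_true, if_false]
          rw [filter_append]
        rw [hXf]
        exact hCZ
      · rw [comp, if_neg him, filter_cons, pn_false hiT] at hCZ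
        simp only [Bool.false_eq_true, if_false] at hCZ
        have hXne : X ≠ [] := by
          intro h; rw [h] at hX; simp [IsVtx] at hX; omega
        have hXdec : X = X.dropLast ++ [X.getLast hXne] := (dropLast_append_getLast hXne).symm
        conv_rhs => rw [hXdec]
        rw [filter_append]
        exact hCZ.trans (prefix_append _ _)
    · -- head forces i = y_k
      unfold CPaux.C at hCZ
      have hZhead : ∃ W, comp i X = i :: W := by
        unfold comp; split
        · exact ⟨_, rfl⟩
        · exact ⟨_, rfl⟩
      obtain ⟨W, hWeq⟩ := hZhead
      rw [hWeq, filter_cons, pn_true hiT] at hCZ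
      simp only [if_true] at hCZ
      rw [← getElem_cons_drop hk1Y, cons_prefix_cons] at hCZ
      exact hiYg hCZ.1.symm
end

section
/- The cycle prefix digraph Γ_Δ(D) has the unique shortest path property: between any two distinct vertices X and Y there is exactly one shortest directed path. -/
/-! ### Auxiliary theory -/

namespace CPD

/-- Filter away the letters occurring in `T`. -/
def flt (T X : List ℕ) : List ℕ := X.filter (fun a => decide (a ∉ T))

lemma flt_cons_of_mem {T : List ℕ} {a : ℕ} (X : List ℕ) (h : a ∈ T) :
    flt T (a :: X) = flt T X := by simp [flt, List.filter_cons, h]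

lemma flt_cons_of_not_mem {T : List ℕ} {a : ℕ} (X : List ℕ) (h : a ∉ T) :
    flt T (a :: X) = a :: flt T X := by simp [flt, List.filter_cons, h]

lemma flt_append (T X X' : List ℕ) : flt T (X ++ X') = flt T X ++ flt T X' :=
  List.filter_append ..

lemma flt_eraseIdx {T : List ℕ} : ∀ (X : List ℕ) (j : ℕ), j < X.length → X.getD j 0 ∈ T →
    flt T (X.eraseIdx j) = flt T X
  | [], j, h, _ => by simp at h
  | a :: X, 0, _, hm => by
      simp only [List.getD_cons_zero] at hm
      rw [List.eraseIdx_cons_zero, flt_cons_of_mem X hm]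
  | a :: X, j + 1, hj, hm => by
      simp only [List.getD_cons_succ] at hm
      have hj' : j < X.length := by simpa using hj
      rw [List.eraseIdx_cons_succ]
      by_cases ha : a ∈ T
      · rw [flt_cons_of_mem _ ha, flt_cons_of_mem _ ha, flt_eraseIdx X j hj' hm]
      · rw [flt_cons_of_not_mem _ ha, flt_cons_of_not_mem _ ha, flt_eraseIdx X j hj' hm]

lemma flt_congr {T T' X : List ℕ} (h : ∀ a ∈ X, a ∈ T ↔ a ∈ T') : flt T X = flt T' X :=
  List.filter_congr (fun a ha => by simp [h a ha])

lemma flt_split {T X : List ℕ} :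
    X.length = (flt T X).length + (X.filter (fun a => decide (a ∈ T))).length := by
  have h := List.length_eq_length_filter_add (l := X) (fun a => decide (a ∉ T))
  have h2 : (X.filter (fun a => !(decide (a ∉ T)))) = X.filter (fun a => decide (a ∈ T)) := by
    apply List.filter_congr; intro a _; simp
  rw [h, h2]; rfl

lemma length_le_flt {T X : List ℕ} (hX : X.Nodup) :
    X.length ≤ (flt T X).length + T.length := by
  have h1 := flt_split (T := T) (X := X)
  have h2 : (X.filter (fun a => decide (a ∈ T))).length ≤ T.length := by
    refine (List.subperm_of_subset (hX.filter _) ?_).length_le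
    intro a ha
    have := List.of_mem_filter ha
    simpa using this
  omega

lemma length_le_flt' {T X : List ℕ} (hX : X.Nodup) {c : ℕ} (hcT : c ∈ T) (hcX : c ∉ X) :
    X.length + 1 ≤ (flt T X).length + T.length := by
  have h1 := flt_split (T := T) (X := X)
  have h2 : (X.filter (fun a => decide (a ∈ T))).length ≤ (T.erase c).length := by
    refine (List.subperm_of_subset (hX.filter _) ?_).length_le
    intro a ha
    have hmem : a ∈ X := List.mem_of_mem_filter ha
    have hp : a ∈ T := by simpa using List.of_mem_filter ha
    exact (List.mem_erase_of_ne (fun h => hcX (by rw [← h]; exact hmem))).2 hp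
  have h3 : (T.erase c).length = T.length - 1 := List.length_erase_of_mem hcT
  have h4 : 1 ≤ T.length := List.length_pos_iff.2 (List.ne_nil_of_mem hcT)
  omega

lemma getD_mem {X : List ℕ} {i : ℕ} (h : i < X.length) : X.getD i 0 ∈ X := by
  rw [List.getD_eq_getElem _ _ h]; exact List.getElem_mem _

lemma getD_ne_getD {Y : List ℕ} (hYn : Y.Nodup) {i j : ℕ} (hij : i ≠ j)
    (hi : i < Y.length) (hj : j < Y.length) : Y.getD i 0 ≠ Y.getD j 0 := by
  rw [List.getD_eq_getElem _ _ hi, List.getD_eq_getElem _ _ hj]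
  intro he; exact hij ((List.Nodup.getElem_inj_iff hYn).1 he)

lemma not_mem_take {Y : List ℕ} (hYn : Y.Nodup) {k m : ℕ} (hm : m < Y.length) (hk : k ≤ m) :
    Y.getD m 0 ∉ Y.take k := by
  intro hmem
  have hd : List.Disjoint (Y.take k) (Y.drop k) := List.disjoint_take_drop hYn le_rfl
  apply hd hmem
  have hlt : m - k < (Y.drop k).length := by rw [List.length_drop]; omega
  have h1 : (Y.drop k)[m - k]'hlt = Y[k + (m - k)] := List.getElem_drop ..
  have h2 : Y.getD m 0 = (Y.drop k)[m - k]'hlt := by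
    rw [h1, List.getD_eq_getElem _ _ hm]
    congr 1; omega
  rw [h2]; exact List.getElem_mem _

lemma mem_take_succ {Y : List ℕ} {k : ℕ} (hk : k < Y.length) (a : ℕ) :
    a ∈ Y.take (k + 1) ↔ a ∈ Y.take k ∨ a = Y.getD k 0 := by
  rw [List.getD_eq_getElem _ _ hk]
  constructor
  · intro h
    rcases List.mem_append.1 (by
        rw [List.take_succ, List.getElem?_eq_getElem hk] at h
        exact h) with h1 | h1
    · exact Or.inl h1
    · right; simpa using h1
  · intro h
    rw [List.take_succ, List.getElem?_eq_getElem hk]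
    rcases h with h1 | h1
    · exact List.mem_append.2 (Or.inl h1)
    · exact List.mem_append.2 (Or.inr (by simpa using h1))

lemma getD_mem_take {Y : List ℕ} {i k : ℕ} (hik : i < k) (hi : i < Y.length) :
    Y.getD i 0 ∈ Y.take k := by
  rw [List.getD_eq_getElem _ _ hi]
  have h1 : i < (Y.take k).length := by simp [List.length_take]; omega
  have h2 : (Y.take k)[i]'h1 = Y[i] := List.getElem_take ..
  rw [← h2]; exact List.getElem_mem _

lemma drop_eq_getD_cons {Y : List ℕ} {k : ℕ} (hk : k < Y.length) :
    Y.drop k = Y.getD k 0 :: Y.drop (k + 1) := by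
  rw [List.getD_eq_getElem _ _ hk]; exact List.drop_eq_getElem_cons hk

/-- `k` is an admissible "canonical-walk length" from `X` to `Y`. -/
def Adm (D : ℕ) (Y X : List ℕ) (k : ℕ) : Prop :=
  (flt (Y.take k) X).take (D - k) = Y.drop k ∧ (1 ≤ k → Y.getD (k - 1) 0 ≠ X.getD 0 0)

noncomputable def phi (D : ℕ) (Y X : List ℕ) : ℕ := sInf {k | Adm D Y X k}

/-- The canonical step towards the next prescribed head letter. -/
def stepTo (Z : List ℕ) (c : ℕ) : List ℕ :=
  if c ∈ Z then c :: Z.eraseIdx (Z.idxOf c) else c :: Z.dropLast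

lemma adm_zero {D : ℕ} {Y X : List ℕ} (hX : X.length = D) : Adm D Y X 0 ↔ X = Y := by
  have h1 : flt (Y.take 0) X = X := by simp [flt]
  constructor
  · rintro ⟨h, -⟩
    rw [h1, Nat.sub_zero, ← hX, List.take_length, List.drop_zero] at h
    exact h
  · rintro rfl
    exact ⟨by rw [h1, Nat.sub_zero, ← hX, List.take_length, List.drop_zero], by omega⟩

lemma adm_exists {Δ D : ℕ} (hD : 2 ≤ D) {X Y : List ℕ} (hX : IsVtx Δ D X) (hY : IsVtx Δ D Y) :
    ∃ k, k ≤ D ∧ Adm D Y X k := by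
  obtain ⟨hXl, hXn, -⟩ := hX
  obtain ⟨hYl, hYn, -⟩ := hY
  by_cases h : Y.getD (D - 1) 0 = X.getD 0 0
  · refine ⟨D - 1, by omega, ?_, ?_⟩
    · have hD1 : D - (D - 1) = 1 := by omega
      have hdY : D - 1 < Y.length := by omega
      have hd : Y.drop (D - 1) = [Y.getD (D - 1) 0] := by
        rw [drop_eq_getD_cons hdY]
        have : Y.drop (D - 1 + 1) = [] := by
          apply List.drop_eq_nil_of_le; omega
        rw [this]
      obtain ⟨a, t, hXat⟩ := List.exists_cons_of_ne_nil
        (show X ≠ [] by intro h0; rw [h0] at hXl; simp at hXl; omega)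
      have ha : a = Y.getD (D - 1) 0 := by
        rw [hXat] at h; simpa using h.symm
      have hnm : a ∉ Y.take (D - 1) := ha ▸ not_mem_take hYn hdY le_rfl
      rw [hD1, hd, hXat, flt_cons_of_not_mem _ hnm, List.take_succ_cons, List.take_zero, ha]
    · intro h1
      rw [← h]
      exact getD_ne_getD hYn (by omega) (by omega) (by omega)
  · refine ⟨D, le_rfl, ?_, fun _ => h⟩
    rw [Nat.sub_self, List.take_zero]
    symm
    apply List.drop_eq_nil_of_le; omega

lemma phi_adm {Δ D : ℕ} (hD : 2 ≤ D) {X Y : List ℕ} (hX : IsVtx Δ D X) (hY : IsVtx Δ D Y) :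
    Adm D Y X (phi D Y X) := by
  obtain ⟨k, -, hk⟩ := adm_exists hD hX hY
  exact Nat.sInf_mem ⟨k, show k ∈ {k | Adm D Y X k} from hk⟩

lemma phi_le_of_adm {D : ℕ} {X Y : List ℕ} {k : ℕ} (h : Adm D Y X k) : phi D Y X ≤ k :=
  Nat.sInf_le (show k ∈ {k | Adm D Y X k} from h)

lemma phi_le_D {Δ D : ℕ} (hD : 2 ≤ D) {X Y : List ℕ} (hX : IsVtx Δ D X) (hY : IsVtx Δ D Y) :
    phi D Y X ≤ D := by
  obtain ⟨k, hkD, hk⟩ := adm_exists hD hX hY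
  exact le_trans (phi_le_of_adm hk) hkD

lemma stepTo_adj {Δ D : ℕ} (hD : 2 ≤ D) {Z : List ℕ} (hZ : IsVtx Δ D Z) {c : ℕ}
    (hc1 : 1 ≤ c) (hc2 : c ≤ Δ + 1) (hne : c ≠ Z.getD 0 0) :
    adjR Δ D 0 Z (stepTo Z c) := by
  obtain ⟨hZl, hZn, hZe⟩ := hZ
  have hZp : 0 < Z.length := by omega
  have hvtx : IsVtx Δ D (stepTo Z c) := by
    unfold stepTo
    by_cases hm : c ∈ Z
    · rw [if_pos hm, List.eraseIdx_idxOf_eq_erase]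
      refine ⟨?_, ?_, ?_⟩
      · simp only [List.length_cons, List.length_erase_of_mem hm, hZl]; omega
      · exact List.nodup_cons.2 ⟨fun h => ((hZn.mem_erase_iff).1 h).1 rfl, hZn.erase c⟩
      · intro x hx
        rcases List.mem_cons.1 hx with rfl | hx
        · exact ⟨hc1, hc2⟩
        · exact hZe x (List.erase_subset hx)
    · rw [if_neg hm]
      refine ⟨?_, ?_, ?_⟩
      · simp only [List.length_cons, List.length_dropLast, hZl]; omega
      · exact List.nodup_cons.2 ⟨fun h => hm (List.dropLast_subset _ h),
          (List.dropLast_sublist Z).nodup hZn⟩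
      · intro x hx
        rcases List.mem_cons.1 hx with rfl | hx
        · exact ⟨hc1, hc2⟩
        · exact hZe x (List.dropLast_subset _ hx)
  refine ⟨⟨hZl, hZn, hZe⟩, hvtx, ?_⟩
  by_cases hm : c ∈ Z
  · left
    have hlt : Z.idxOf c < Z.length := List.idxOf_lt_length_iff.2 hm
    have hgd : Z.getD (Z.idxOf c) 0 = c := by
      rw [List.getD_eq_getElem _ _ hlt]; exact List.getElem_idxOf hlt
    refine ⟨Z.idxOf c, ?_, by omega, ?_⟩
    · rcases Nat.eq_zero_or_pos (Z.idxOf c) with h0 | h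
      · exfalso; apply hne; rw [← hgd, h0]
      · omega
    · unfold stepTo
      rw [if_pos hm, hgd]
  · right
    exact ⟨c, hm, by unfold stepTo; rw [if_neg hm]⟩

lemma adm_step {Δ D : ℕ} (hD : 2 ≤ D) {Y Z : List ℕ} (hY : IsVtx Δ D Y) (hZ : IsVtx Δ D Z)
    {k : ℕ} (hk : k < D) (h : Adm D Y Z (k + 1)) :
    Adm D Y (stepTo Z (Y.getD k 0)) k := by
  obtain ⟨hYl, hYn, -⟩ := hY
  obtain ⟨hZl, hZn, -⟩ := hZ
  obtain ⟨hmain, hleg⟩ := h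
  set c := Y.getD k 0 with hc
  have hkY : k < Y.length := by omega
  have hcTk : c ∉ Y.take k := not_mem_take hYn hkY le_rfl
  have hcTk1 : c ∈ Y.take (k + 1) := getD_mem_take (by omega) hkY
  have hdropk : Y.drop k = c :: Y.drop (k + 1) := drop_eq_getD_cons hkY
  have hDk : D - k = (D - (k + 1)) + 1 := by omega
  constructor
  · by_cases hm : c ∈ Z
    · have hlt : Z.idxOf c < Z.length := List.idxOf_lt_length_iff.2 hm
      have hrest : stepTo Z c = c :: Z.eraseIdx (Z.idxOf c) := by
        unfold stepTo; rw [if_pos hm]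
      have hgd : Z.getD (Z.idxOf c) 0 = c := by
        rw [List.getD_eq_getElem _ _ hlt]; exact List.getElem_idxOf hlt
      have hcne : c ∉ Z.eraseIdx (Z.idxOf c) := by
        rw [List.eraseIdx_idxOf_eq_erase]
        exact fun hmm => ((hZn.mem_erase_iff).1 hmm).1 rfl
      rw [hrest, flt_cons_of_not_mem _ hcTk, hDk, List.take_succ_cons, hdropk]
      congr 1
      have h1 : flt (Y.take k) (Z.eraseIdx (Z.idxOf c)) =
          flt (Y.take (k + 1)) (Z.eraseIdx (Z.idxOf c)) :=
        flt_congr (fun a ha => by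
          rw [mem_take_succ hkY]
          exact (or_iff_left (fun (he : a = Y.getD k 0) => hcne ((he.trans hc.symm) ▸ ha))).symm)
      rw [h1, flt_eraseIdx Z (Z.idxOf c) hlt (by rw [hgd]; exact hcTk1)]
      exact hmain
    · have hrest : stepTo Z c = c :: Z.dropLast := by unfold stepTo; rw [if_neg hm]
      have hZne : Z ≠ [] := by intro h0; rw [h0] at hZl; simp at hZl; omega
      have hcd : c ∉ Z.dropLast := fun hh => hm (List.dropLast_subset _ hh)
      rw [hrest, flt_cons_of_not_mem _ hcTk, hDk, List.take_succ_cons, hdropk]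
      congr 1
      have hTk1 : flt (Y.take k) Z.dropLast = flt (Y.take (k + 1)) Z.dropLast :=
        flt_congr (fun a ha => by
          rw [mem_take_succ hkY]
          exact (or_iff_left (fun he => hcd (by rw [hc, ← he]; exact ha))).symm)
      have hdn : Z.dropLast.Nodup := (List.dropLast_sublist Z).nodup hZn
      have hdl : Z.dropLast.length = D - 1 := by rw [List.length_dropLast, hZl]
      have hT1l : (Y.take (k + 1)).length = k + 1 := by
        rw [List.length_take]; omega
      have hlen : D - (k + 1) ≤ (flt (Y.take (k + 1)) Z.dropLast).length := by
        have := length_le_flt' (T := Y.take (k + 1)) hdn hcTk1 hcd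
        omega
      have hsplit : Z.dropLast ++ [Z.getLast hZne] = Z := List.dropLast_append_getLast hZne
      calc (flt (Y.take k) Z.dropLast).take (D - (k + 1))
          = (flt (Y.take (k + 1)) Z.dropLast).take (D - (k + 1)) := by rw [hTk1]
        _ = (flt (Y.take (k + 1)) Z.dropLast ++ flt (Y.take (k + 1)) [Z.getLast hZne]).take
              (D - (k + 1)) := (List.take_append_of_le_length hlen).symm
        _ = (flt (Y.take (k + 1)) Z).take (D - (k + 1)) := by rw [← flt_append, hsplit]
        _ = Y.drop (k + 1) := hmain
  · intro hk1
    have hs : (stepTo Z c).getD 0 0 = c := by unfold stepTo; split <;> rfl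
    rw [hs, hc]
    exact getD_ne_getD hYn (by omega) (by omega) (by omega)

lemma adm_walk {Δ D : ℕ} (hD : 2 ≤ D) {Y : List ℕ} (hY : IsVtx Δ D Y) :
    ∀ k, k ≤ D → ∀ Z, IsVtx Δ D Z → Adm D Y Z k → ∃ w, IsWalk (adjR Δ D 0) Z Y k w := by
  intro k
  induction k with
  | zero =>
      intro _ Z hZ hA
      exact ⟨fun _ => Z, rfl, (adm_zero hZ.1).1 hA, fun i hi => absurd hi (by omega)⟩
  | succ k ih =>
      intro hk1 Z hZ hA
      set c := Y.getD k 0 with hc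
      have hkY : k < Y.length := by rw [hY.1]; omega
      have hcmem : c ∈ Y := getD_mem hkY
      obtain ⟨hc1, hc2⟩ := hY.2.2 c hcmem
      have hne : c ≠ Z.getD 0 0 := by
        have h := hA.2 (by omega)
        simpa [hc] using h
      have harc : adjR Δ D 0 Z (stepTo Z c) := stepTo_adj hD hZ hc1 hc2 hne
      have hvtx : IsVtx Δ D (stepTo Z c) := harc.2.1
      have hA' : Adm D Y (stepTo Z c) k := adm_step hD hY hZ (by omega) hA
      obtain ⟨w', hw'⟩ := ih (by omega) _ hvtx hA'
      refine ⟨fun i => match i with | 0 => Z | (j + 1) => w' j, rfl, hw'.2.1, ?_⟩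
      intro i hi
      match i with
      | 0 =>
          show adjR Δ D 0 Z (w' 0)
          rw [hw'.1]; exact harc
      | (j + 1) => exact hw'.2.2 j (by omega)

lemma key {Δ D : ℕ} (hD : 2 ≤ D) {Y Z W : List ℕ} (hY : IsVtx Δ D Y)
    (harc : adjR Δ D 0 Z W) {k : ℕ} (hk : k + 1 ≤ D) (hadm : Adm D Y W k) :
    (∃ k' ≤ k, Adm D Y Z k') ∨ (Adm D Y Z (k + 1) ∧ W = stepTo Z (Y.getD k 0)) := by
  obtain ⟨hZv, hWv, hcase⟩ := harc
  obtain ⟨hZl, hZn, hZe⟩ := hZv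
  obtain ⟨hWl, hWn, hWe⟩ := hWv
  obtain ⟨hYl, hYn, hYe⟩ := hY
  have hZne : Z ≠ [] := by intro h0; rw [h0] at hZl; simp at hZl; omega
  obtain ⟨c, j, hj1, hjD, hW, hctype⟩ :
      ∃ c j, 1 ≤ j ∧ j < D ∧ W = c :: Z.eraseIdx j ∧
        (c = Z.getD j 0 ∨ (c ∉ Z ∧ j = D - 1)) := by
    rcases hcase with ⟨j, hj1, hjD, hWj⟩ | ⟨y, hy, hWy⟩
    · exact ⟨Z.getD j 0, j, hj1, hjD, hWj, Or.inl rfl⟩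
    · refine ⟨y, D - 1, by omega, by omega, ?_, Or.inr ⟨hy, rfl⟩⟩
      rw [hWy, List.dropLast_eq_eraseIdx (by omega : D - 1 + 1 = Z.length)]
  set F := Z.eraseIdx j with hF
  have hjZ : j < Z.length := by omega
  have hFl : F.length = D - 1 := by
    have h' : F.length = Z.length - 1 := by rw [hF, List.length_eraseIdx]; simp [hjZ]
    omega
  have hFne : F ≠ [] := by intro h0; rw [h0] at hFl; simp at hFl; omega
  have hF0 : F.getD 0 0 = Z.getD 0 0 := by
    obtain ⟨a, t, hZat⟩ := List.exists_cons_of_ne_nil hZne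
    obtain ⟨j', rfl⟩ : ∃ j', j = j' + 1 := ⟨j - 1, by omega⟩
    rw [hF, hZat]
    simp
  have hcF : c ∉ F := by
    have hh := hWn; rw [hW] at hh
    exact (List.nodup_cons.1 hh).1
  have hkY : k < Y.length := by omega
  have hdropk : Y.drop k = Y.getD k 0 :: Y.drop (k + 1) := drop_eq_getD_cons hkY
  have hdrople : Z.dropLast = Z.eraseIdx (D - 1) :=
    List.dropLast_eq_eraseIdx (by omega : D - 1 + 1 = Z.length)
  by_cases hc : c = Y.getD k 0
  · right
    have hcTk : c ∉ Y.take k := hc ▸ not_mem_take hYn hkY le_rfl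
    have hWflt : flt (Y.take k) W = c :: flt (Y.take k) F := by
      rw [hW]; exact flt_cons_of_not_mem _ hcTk
    have hmain := hadm.1
    rw [hWflt, show D - k = (D - (k + 1)) + 1 by omega, List.take_succ_cons, hdropk, ← hc]
      at hmain
    have hmain' : (flt (Y.take k) F).take (D - (k + 1)) = Y.drop (k + 1) := by
      injection hmain
    have hcTk1 : c ∈ Y.take (k + 1) := hc ▸ getD_mem_take (by omega) hkY
    have hfltF : flt (Y.take (k + 1)) F = flt (Y.take k) F :=
      (flt_congr (fun a ha => by
        rw [mem_take_succ hkY]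
        exact (or_iff_left (fun he => hcF (by rw [hc, ← he]; exact ha))).symm)).symm
    have hlegc : c ≠ Z.getD 0 0 := by
      rcases hctype with hrot | ⟨hcZ, hjD1⟩
      · have hZ0F : Z.getD 0 0 ∈ F := by
          rw [← hF0]; exact getD_mem (by omega)
        exact fun h => hcF (h ▸ hZ0F)
      · exact fun h => hcZ (h ▸ getD_mem (show 0 < Z.length by omega))
    rcases hctype with hrot | ⟨hcZ, hjD1⟩
    · have hZflt : flt (Y.take (k + 1)) Z = flt (Y.take (k + 1)) F :=
        (flt_eraseIdx Z j hjZ (by rw [← hrot]; exact hcTk1)).symm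
      refine ⟨⟨?_, ?_⟩, ?_⟩
      · rw [hZflt, hfltF]; exact hmain'
      · intro _
        simp only [Nat.add_sub_cancel]
        rw [← hc]
        exact hlegc
      · have hmem : c ∈ Z := by rw [hrot]; exact getD_mem hjZ
        have hltI : Z.idxOf c < Z.length := List.idxOf_lt_length_iff.2 hmem
        have hidx : Z.idxOf c = j := by
          have h2 : Z[Z.idxOf c]'hltI = c := List.getElem_idxOf hltI
          have h3 : Z[j]'hjZ = c := by
            rw [List.getD_eq_getElem _ _ hjZ] at hrot; exact hrot.symm
          exact (List.Nodup.getElem_inj_iff hZn).1 (h2.trans h3.symm)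
        rw [← hc]
        unfold stepTo
        rw [if_pos hmem, hidx]
        exact hW
    · have hZflt : flt (Y.take (k + 1)) Z = flt (Y.take k) Z :=
        flt_congr (fun a ha => by
          rw [mem_take_succ hkY]
          exact or_iff_left (fun he => hcZ (by rw [hc, ← he]; exact ha)))
      have hFd : F = Z.dropLast := by rw [hF, hjD1, ← hdrople]
      have hsplit : F ++ [Z.getLast hZne] = Z := by
        rw [hFd]; exact List.dropLast_append_getLast hZne
      have hfz : flt (Y.take k) F ++ flt (Y.take k) [Z.getLast hZne] = flt (Y.take k) Z := by
        rw [← flt_append, hsplit]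
      refine ⟨⟨?_, ?_⟩, ?_⟩
      · have hFn : F.Nodup := by
          rw [hFd]; exact (List.dropLast_sublist Z).nodup hZn
        have hTkl : (Y.take k).length = k := by rw [List.length_take, hYl]; omega
        have hlenF : D - (k + 1) ≤ (flt (Y.take k) F).length := by
          have := length_le_flt (T := Y.take k) hFn
          omega
        rw [hZflt, ← hfz, List.take_append_of_le_length hlenF]
        exact hmain'
      · intro _
        simp only [Nat.add_sub_cancel]
        rw [← hc]
        exact hlegc
      · rw [← hc]
        unfold stepTo
        rw [if_neg hcZ, hdrople, ← hjD1]
        exact hW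
  · left
    have hcTk : c ∈ Y.take k := by
      by_contra hno
      have hWflt : flt (Y.take k) W = c :: flt (Y.take k) F := by
        rw [hW]; exact flt_cons_of_not_mem _ hno
      have hmain := hadm.1
      rw [hWflt, show D - k = (D - (k + 1)) + 1 by omega, List.take_succ_cons, hdropk] at hmain
      exact hc (by injection hmain)
    have hk1 : 1 ≤ k := by
      rcases Nat.eq_zero_or_pos k with rfl | h
      · simp at hcTk
      · exact h
    have hWflt : flt (Y.take k) W = flt (Y.take k) F := by
      rw [hW]; exact flt_cons_of_mem _ hcTk
    have hmainF : (flt (Y.take k) F).take (D - k) = Y.drop k := by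
      rw [← hWflt]; exact hadm.1
    have hlenYdrop : (Y.drop k).length = D - k := by rw [List.length_drop, hYl]
    have hlenF : D - k ≤ (flt (Y.take k) F).length := by
      have := congrArg List.length hmainF
      rw [List.length_take, hlenYdrop] at this
      omega
    have hmainZ : (flt (Y.take k) Z).take (D - k) = Y.drop k := by
      rcases hctype with hrot | ⟨hcZ, hjD1⟩
      · rw [← flt_eraseIdx Z j hjZ (hrot ▸ hcTk)]
        exact hmainF
      · have hFd : F = Z.dropLast := by rw [hF, hjD1, ← hdrople]
        have hsplit : F ++ [Z.getLast hZne] = Z := by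
          rw [hFd]; exact List.dropLast_append_getLast hZne
        have hfz : flt (Y.take k) F ++ flt (Y.take k) [Z.getLast hZne] = flt (Y.take k) Z := by
          rw [← flt_append, hsplit]
        rw [← hfz, List.take_append_of_le_length hlenF]
        exact hmainF
    obtain ⟨m, rfl⟩ : ∃ m, k = m + 1 := ⟨k - 1, by omega⟩
    by_cases hh : Y.getD m 0 = Z.getD 0 0
    · refine ⟨m, by omega, ?_, ?_⟩
      · obtain ⟨a, t, hZat⟩ := List.exists_cons_of_ne_nil hZne
        have ha : a = Y.getD m 0 := by rw [hZat] at hh; simpa using hh.symm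
        have hk1Y : m < Y.length := by omega
        have hnotmem : a ∉ Y.take m := by rw [ha]; exact not_mem_take hYn hk1Y le_rfl
        have hamem : a ∈ Y.take (m + 1) := by rw [ha]; exact getD_mem_take (by omega) hk1Y
        have hat : a ∉ t := by rw [hZat] at hZn; exact (List.nodup_cons.1 hZn).1
        have h1 : flt (Y.take m) Z = a :: flt (Y.take m) t := by
          rw [hZat]; exact flt_cons_of_not_mem _ hnotmem
        have h2 : flt (Y.take m) t = flt (Y.take (m + 1)) t :=
          flt_congr (fun x hx => by
            rw [mem_take_succ hk1Y]
            exact (or_iff_left (fun he => hat (by rw [ha, ← he]; exact hx))).symm)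
        have h3 : flt (Y.take (m + 1)) Z = flt (Y.take (m + 1)) t := by
          rw [hZat]; exact flt_cons_of_mem _ hamem
        have h4 : flt (Y.take m) Z = Y.getD m 0 :: flt (Y.take (m + 1)) Z := by
          rw [h1, h2, ← h3, ha]
        rw [h4, show D - m = (D - (m + 1)) + 1 by omega, List.take_succ_cons, hmainZ]
        rw [show Y.drop m = Y.getD m 0 :: Y.drop (m + 1) from drop_eq_getD_cons hk1Y]
      · intro hk2
        rw [← hh]
        exact getD_ne_getD hYn (by omega) (by omega) (by omega)
    · refine ⟨m + 1, le_rfl, hmainZ, fun _ => ?_⟩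
      exact hh

lemma walk_ge {Δ D : ℕ} (hD : 2 ≤ D) {Y : List ℕ} (hY : IsVtx Δ D Y) :
    ∀ n (Z : List ℕ) (w : ℕ → List ℕ), IsVtx Δ D Z → IsWalk (adjR Δ D 0) Z Y n w →
      phi D Y Z ≤ n := by
  intro n
  induction n with
  | zero =>
      intro Z w hZ hw
      have hZY : Z = Y := by rw [← hw.1, hw.2.1]
      exact Nat.sInf_le (show 0 ∈ {k | Adm D Y Z k} from (adm_zero hZ.1).2 hZY)
  | succ n ih =>
      intro Z w hZ hw
      have harc : adjR Δ D 0 Z (w 1) := by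
        have := hw.2.2 0 (by omega); rwa [hw.1] at this
      have hWv : IsVtx Δ D (w 1) := harc.2.1
      have hsub : IsWalk (adjR Δ D 0) (w 1) Y n (fun i => w (i + 1)) :=
        ⟨rfl, hw.2.1, fun i hi => hw.2.2 (i + 1) (by omega)⟩
      have hih : phi D Y (w 1) ≤ n := ih (w 1) _ hWv hsub
      have hadm : Adm D Y (w 1) (phi D Y (w 1)) := phi_adm hD hWv hY
      by_cases hk : phi D Y (w 1) + 1 ≤ D
      · rcases key hD hY ⟨hZ, hWv, harc.2.2⟩ hk hadm with ⟨k', hk', hadm'⟩ | ⟨hadm', -⟩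
        · exact le_trans (phi_le_of_adm hadm') (by omega)
        · exact le_trans (phi_le_of_adm hadm') (by omega)
      · have hphiD : phi D Y Z ≤ D := phi_le_D hD hZ hY
        omega

lemma walk_unique {Δ D : ℕ} (hD : 2 ≤ D) {Y : List ℕ} (hY : IsVtx Δ D Y) :
    ∀ n (Z : List ℕ) (w w' : ℕ → List ℕ), IsVtx Δ D Z →
      IsWalk (adjR Δ D 0) Z Y n w → IsWalk (adjR Δ D 0) Z Y n w' →
      n ≤ phi D Y Z → ∀ i ≤ n, w i = w' i := by
  intro n
  induction n with
  | zero =>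
      intro Z w w' _ hw hw' _ i hi
      have hi0 : i = 0 := by omega
      subst hi0; rw [hw.1, hw'.1]
  | succ n ih =>
      intro Z w w' hZ hw hw' hn i hi
      have harc : adjR Δ D 0 Z (w 1) := by
        have := hw.2.2 0 (by omega); rwa [hw.1] at this
      have harc' : adjR Δ D 0 Z (w' 1) := by
        have := hw'.2.2 0 (by omega); rwa [hw'.1] at this
      have hWv : IsVtx Δ D (w 1) := harc.2.1
      have hWv' : IsVtx Δ D (w' 1) := harc'.2.1
      have hsub : IsWalk (adjR Δ D 0) (w 1) Y n (fun i => w (i + 1)) :=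
        ⟨rfl, hw.2.1, fun i hi => hw.2.2 (i + 1) (by omega)⟩
      have hsub' : IsWalk (adjR Δ D 0) (w' 1) Y n (fun i => w' (i + 1)) :=
        ⟨rfl, hw'.2.1, fun i hi => hw'.2.2 (i + 1) (by omega)⟩
      have h1 : phi D Y (w 1) ≤ n := walk_ge hD hY n _ _ hWv hsub
      have h1' : phi D Y (w' 1) ≤ n := walk_ge hD hY n _ _ hWv' hsub'
      have hphiD : phi D Y Z ≤ D := phi_le_D hD hZ hY
      have hstep : ∀ (V : List ℕ), adjR Δ D 0 Z V → phi D Y V ≤ n →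
          V = stepTo Z (Y.getD (phi D Y V) 0) ∧ phi D Y V = n := by
        intro V harcV hV
        have hadmV : Adm D Y V (phi D Y V) := phi_adm hD harcV.2.1 hY
        have hkle : phi D Y V + 1 ≤ D := by omega
        rcases key hD hY harcV hkle hadmV with ⟨k', hk', hadm'⟩ | ⟨hadm', heq⟩
        · exfalso
          have := phi_le_of_adm hadm'
          omega
        · have hle := phi_le_of_adm hadm'
          exact ⟨heq, by omega⟩
      obtain ⟨he, hn1⟩ := hstep (w 1) harc h1
      obtain ⟨he', hn1'⟩ := hstep (w' 1) harc' h1'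
      have hw1 : w 1 = w' 1 := by rw [he, he', hn1, hn1']
      have hsub'' : IsWalk (adjR Δ D 0) (w 1) Y n (fun i => w' (i + 1)) :=
        ⟨hw1.symm, hw'.2.1, fun i hi => hw'.2.2 (i + 1) (by omega)⟩
      have hrec := ih (w 1) (fun i => w (i + 1)) (fun i => w' (i + 1)) hWv hsub hsub''
        (by omega)
      match i with
      | 0 => rw [hw.1, hw'.1]
      | (j + 1) => exact hrec j (by omega)

end CPD

/-- `Γ_Δ(D)` has the unique shortest path property: between any
two distinct vertices there is exactly one shortest directed path. -/
theorem unique_shortest_path (Δ D : ℕ) (hD : 2 ≤ D) (hΔ : D ≤ Δ)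
    (X Y : List ℕ) (hX : IsVtx Δ D X) (hY : IsVtx Δ D Y) (hne : X ≠ Y) :
    (∃ w, IsWalk (adjR Δ D 0) X Y (cpDist (adjR Δ D 0) X Y) w) ∧
    ∀ w w', IsWalk (adjR Δ D 0) X Y (cpDist (adjR Δ D 0) X Y) w →
      IsWalk (adjR Δ D 0) X Y (cpDist (adjR Δ D 0) X Y) w' →
      ∀ i ≤ cpDist (adjR Δ D 0) X Y, w i = w' i := by
  classical
  have hadm : CPD.Adm D Y X (CPD.phi D Y X) := CPD.phi_adm hD hX hY
  have hphiD : CPD.phi D Y X ≤ D := CPD.phi_le_D hD hX hY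
  obtain ⟨w0, hw0⟩ := CPD.adm_walk hD hY (CPD.phi D Y X) hphiD X hX hadm
  have hmem : CPD.phi D Y X ∈ {n | ∃ w, IsWalk (adjR Δ D 0) X Y n w} := ⟨w0, hw0⟩
  have hcd : cpDist (adjR Δ D 0) X Y = CPD.phi D Y X := by
    unfold cpDist
    refine le_antisymm (Nat.sInf_le hmem) ?_
    obtain ⟨w, hw⟩ := Nat.sInf_mem (⟨_, hmem⟩ : Set.Nonempty {n | ∃ w, IsWalk (adjR Δ D 0) X Y n w})
    exact CPD.walk_ge hD hY _ X w hX hw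
  constructor
  · exact ⟨w0, by rw [hcd]; exact hw0⟩
  · intro w w' h h' i hi
    exact CPD.walk_unique hD hY _ X w w' hX h h' (le_of_eq hcd) i hi
end

section
/- In Γ_Δ(D), if (u,v) is an arc then v is uniquely determined by u and the first letter of v; consequently, for any vertex u the map sending each out-neighbor of u to its first letter is a bijection from the out-neighborhood of u onto {1,…,Δ+1} \ {u_1}, and Γ_Δ(D) is Δ-regular. -/
lemma rot_perm (l : List ℕ) (j : ℕ) (h : j < l.length) :
    l.Perm (l[j] :: l.eraseIdx j) :=
  (List.perm_cons_erase (l.getElem_mem h)).trans ((List.erase_getElem h).cons _)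

lemma headI_getElem (l : List ℕ) (h : 0 < l.length) : l.headI = l[0] := by
  cases l with | nil => simp at h | cons a t => rfl


/-- in `Γ_Δ(D)`, an out-neighbor of `u` is uniquely determined by
its first letter; the map sending each out-neighbor to its first letter is a
bijection onto `{1, …, Δ+1} \ {u_1}`; and `Γ_Δ(D)` is `Δ`-regular. -/
theorem out_neighbors_bijection (Δ D : ℕ) (hD : 1 ≤ D) (hΔ : D ≤ Δ)
    (u : List ℕ) (hu : IsVtx Δ D u) :
    (∀ v w, adjR Δ D 0 u v → adjR Δ D 0 u w → v.headI = w.headI → v = w) ∧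
    (∀ z, (1 ≤ z ∧ z ≤ Δ + 1 ∧ z ≠ u.headI) ↔
      ∃ v, adjR Δ D 0 u v ∧ v.headI = z) ∧
    {v | adjR Δ D 0 u v}.ncard = Δ := by
  obtain ⟨hlen, hnd, hmem⟩ := hu
  have hlpos : 0 < u.length := by omega
  have hd0 : u.headI = u[0] := headI_getElem u hlpos
  -- part 1
  have part1 : ∀ v w, adjR Δ D 0 u v → adjR Δ D 0 u w → v.headI = w.headI → v = w := by
    rintro v w ⟨-, -, hv⟩ ⟨-, -, hw⟩ hvw
    rcases hv with ⟨j, hj1, hj2, rfl⟩ | ⟨y, hy, rfl⟩ <;>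
      rcases hw with ⟨j', hj1', hj2', rfl⟩ | ⟨y', hy', rfl⟩
    · have hjl : j < u.length := by omega
      have hjl' : j' < u.length := by omega
      simp only [List.headI_cons, List.getD_eq_getElem u 0 hjl,
        List.getD_eq_getElem u 0 hjl'] at hvw
      have : j = j' := (hnd.getElem_inj_iff).1 hvw
      subst this; rfl
    · have hjl : j < u.length := by omega
      simp only [List.headI_cons, List.getD_eq_getElem u 0 hjl] at hvw
      exact absurd (hvw ▸ u.getElem_mem hjl) hy'
    · have hjl : j' < u.length := by omega
      simp only [List.headI_cons, List.getD_eq_getElem u 0 hjl] at hvw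
      exact absurd (hvw ▸ u.getElem_mem hjl) hy
    · simp only [List.headI_cons] at hvw; subst hvw; rfl
  have huv : IsVtx Δ D u := ⟨hlen, hnd, hmem⟩
  -- part 2
  have part2 : ∀ z, (1 ≤ z ∧ z ≤ Δ + 1 ∧ z ≠ u.headI) ↔
      ∃ v, adjR Δ D 0 u v ∧ v.headI = z := by
    intro z
    constructor
    · rintro ⟨hz1, hz2, hz3⟩
      by_cases hz : z ∈ u
      · set j := u.idxOf z with hjdef
        have hjl : j < u.length := List.idxOf_lt_length_iff.2 hz
        have hget : u[j] = z := List.getElem_idxOf hjl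
        have hj1 : 1 ≤ j := by
          rcases Nat.eq_zero_or_pos j with h0 | h1
          · simp only [h0] at hget
            exact absurd (hd0 ▸ hget.symm) hz3
          · exact h1
        refine ⟨u.getD j 0 :: u.eraseIdx j, ⟨huv, ?_, Or.inl ⟨j, hj1, by omega, rfl⟩⟩, ?_⟩
        · have hperm := rot_perm u j hjl
          rw [List.getD_eq_getElem u 0 hjl]
          refine ⟨?_, hperm.nodup_iff.1 hnd, fun x hx => hmem x (hperm.mem_iff.2 hx)⟩
          rw [← hperm.length_eq, hlen]
        · rw [List.headI_cons, List.getD_eq_getElem u 0 hjl]; exact hget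
      · refine ⟨z :: u.dropLast, ⟨huv, ?_, Or.inr ⟨z, hz, rfl⟩⟩, rfl⟩
        have hsub := List.dropLast_sublist u
        refine ⟨by simp [hlen]; omega, ?_, ?_⟩
        · exact List.nodup_cons.2 ⟨fun h => hz (hsub.mem h), hnd.sublist hsub⟩
        · rintro x hx
          rcases List.mem_cons.1 hx with rfl | hx
          · exact ⟨hz1, hz2⟩
          · exact hmem x (hsub.mem hx)
    · rintro ⟨v, ⟨-, hvv, hv⟩, rfl⟩
      rcases hv with ⟨j, hj1, hj2, rfl⟩ | ⟨y, hy, rfl⟩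
      · have hjl : j < u.length := by omega
        simp only [List.headI_cons, List.getD_eq_getElem u 0 hjl]
        refine ⟨(hmem _ (u.getElem_mem hjl)).1, (hmem _ (u.getElem_mem hjl)).2, ?_⟩
        rw [hd0]
        intro h
        have := (hnd.getElem_inj_iff).1 h
        omega
      · simp only [List.headI_cons]
        have hy1 := hvv.2.2 y (List.mem_cons_self)
        refine ⟨hy1.1, hy1.2, fun h => hy ?_⟩
        rw [h, hd0]; exact u.getElem_mem hlpos
  refine ⟨part1, part2, ?_⟩
  -- part 3
  have himg : List.headI '' {v | adjR Δ D 0 u v}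
      = ↑((Finset.Icc 1 (Δ + 1)).erase u.headI) := by
    ext z
    simp only [Set.mem_image, Set.mem_setOf_eq, Finset.coe_erase, Set.mem_diff,
      Finset.coe_Icc, Set.mem_Icc, Set.mem_singleton_iff]
    constructor
    · rintro ⟨v, hv, rfl⟩
      have := (part2 v.headI).2 ⟨v, hv, rfl⟩
      exact ⟨⟨this.1, this.2.1⟩, this.2.2⟩
    · rintro ⟨⟨h1, h2⟩, h3⟩
      obtain ⟨v, hv, hvz⟩ := (part2 z).1 ⟨h1, h2, h3⟩
      exact ⟨v, hv, hvz⟩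
  have hinj : Set.InjOn List.headI {v | adjR Δ D 0 u v} := fun v hv w hw h =>
    part1 v w hv hw h
  have := Set.ncard_image_of_injOn hinj
  rw [himg, Set.ncard_coe_finset] at this
  rw [← this, Finset.card_erase_of_mem, Nat.card_Icc]
  · omega
  · rw [Finset.mem_Icc, hd0]
    exact ⟨(hmem _ (u.getElem_mem hlpos)).1, (hmem _ (u.getElem_mem hlpos)).2⟩
end
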